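/- Let $x_1, x_2$ be i.i.d. with law $S\,\delta_0 + (1-S)\,\mathrm{Unif}(0,1]$ for $S \in [0,1)$. The conditional variances of $x_1$ satisfy $\mathrm{Var}(x_1 \mid x_1 \le x_2) = \frac{1}{6}\frac{(1-S)^2}{1+S^2} - \left(\frac{1}{3}\frac{(1-S)^2}{1+S^2}\right)^2$ and $\mathrm{Var}(x_1 \mid x_1 > x_2) = \frac{1}{6}\frac{3+S}{1+S} - \left(\frac{1}{3}\frac{2+S}{1+S}\right)^2$. -/

import Mathlib

open MeasureTheory ProbabilityTheory

/-- The sparse-uniform mixture law `S·δ₀ + (1-S)·Unif(0,1]`. -/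
noncomputable def mixLaw (S : ℝ) : Measure ℝ :=
  (ENNReal.ofReal S) • Measure.dirac 0 +
    (ENNReal.ofReal (1 - S)) • (volume.restrict (Set.Ioc (0:ℝ) 1))

lemma finIoc : IsFiniteMeasure (volume.restrict (Set.Ioc (0:ℝ) 1)) := by
  constructor
  rw [Measure.restrict_apply_univ, Real.volume_Ioc]
  simp

lemma mixLaw_prob (S : ℝ) (h0 : 0 ≤ S) (h1 : S ≤ 1) : IsProbabilityMeasure (mixLaw S) := by
  constructor
  simp only [mixLaw, Measure.add_apply, Measure.smul_apply, smul_eq_mul,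
    measure_univ, Measure.restrict_apply_univ, Real.volume_Ioc, sub_zero,
    ENNReal.ofReal_one, mul_one]
  rw [← ENNReal.ofReal_add h0 (by linarith), add_sub_cancel, ENNReal.ofReal_one]

lemma intMix (S : ℝ) (h0 : 0 ≤ S) (h1 : S ≤ 1) (g : ℝ → ℝ) (hg : Measurable g)
    (hb : ∀ x, |g x| ≤ 1) :
    ∫ x, g x ∂(mixLaw S) = S * g 0 + (1 - S) * ∫ x in Set.Ioc (0:ℝ) 1, g x := by
  haveI := finIoc
  have hint2 : Integrable g (volume.restrict (Set.Ioc (0:ℝ) 1)) := by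
    rw [← memLp_one_iff_integrable]
    exact MemLp.of_bound hg.aestronglyMeasurable 1
      (Filter.Eventually.of_forall fun x => by simpa [Real.norm_eq_abs] using hb x)
  have hint1 : Integrable g (Measure.dirac (0:ℝ)) := by
    rw [← memLp_one_iff_integrable]
    exact MemLp.of_bound hg.aestronglyMeasurable 1
      (Filter.Eventually.of_forall fun x => by simpa [Real.norm_eq_abs] using hb x)
  rw [mixLaw, integral_add_measure (hint1.smul_measure ENNReal.ofReal_ne_top)
      (hint2.smul_measure ENNReal.ofReal_ne_top),
    integral_smul_measure, integral_smul_measure, integral_dirac,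
    ENNReal.toReal_ofReal h0, ENNReal.toReal_ofReal (by linarith : (0:ℝ) ≤ 1 - S)]
  simp [smul_eq_mul]

lemma intMixProd (S : ℝ) (h0 : 0 ≤ S) (h1 : S ≤ 1) (f : ℝ × ℝ → ℝ) (hf : Measurable f)
    (hb : ∀ p, |f p| ≤ 1) :
    ∫ p, f p ∂((mixLaw S).prod (mixLaw S)) =
      S^2 * f (0,0) + S*(1-S) * (∫ y in Set.Ioc (0:ℝ) 1, f (0, y))
      + (1-S)*S * (∫ x in Set.Ioc (0:ℝ) 1, f (x, 0))
      + (1-S)^2 * (∫ x in Set.Ioc (0:ℝ) 1, ∫ y in Set.Ioc (0:ℝ) 1, f (x, y)) := by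
  haveI := finIoc
  haveI := mixLaw_prob S h0 h1
  have hIoc : ∀ (x : ℝ), |∫ y in Set.Ioc (0:ℝ) 1, f (x, y)| ≤ 1 := by
    intro x
    rw [← Real.norm_eq_abs]
    calc ‖∫ y in Set.Ioc (0:ℝ) 1, f (x, y)‖
        ≤ 1 * ((volume.restrict (Set.Ioc (0:ℝ) 1)) Set.univ).toReal :=
          norm_integral_le_of_norm_le_const
            (Filter.Eventually.of_forall fun y => by
              simpa [Real.norm_eq_abs] using hb (x, y))
      _ ≤ 1 := by
          rw [Measure.restrict_apply_univ, Real.volume_Ioc]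
          simp
  have hint : Integrable f ((mixLaw S).prod (mixLaw S)) := by
    rw [← memLp_one_iff_integrable]
    exact MemLp.of_bound hf.aestronglyMeasurable 1
      (Filter.Eventually.of_forall fun p => by simpa [Real.norm_eq_abs] using hb p)
  rw [integral_prod f hint]
  have hinner : ∀ x : ℝ, ∫ y, f (x, y) ∂(mixLaw S)
      = S * f (x, 0) + (1 - S) * ∫ y in Set.Ioc (0:ℝ) 1, f (x, y) := fun x =>
    intMix S h0 h1 _ (hf.comp (measurable_const.prodMk measurable_id)) (fun y => hb (x, y))
  rw [integral_congr_ae (Filter.Eventually.of_forall hinner)]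
  have hmeasH : Measurable fun x => ∫ y in Set.Ioc (0:ℝ) 1, f (x, y) :=
    (hf.stronglyMeasurable.integral_prod_right').measurable
  rw [intMix S h0 h1 _ (by fun_prop) ?hbd]
  case hbd =>
    intro x
    calc |S * f (x, 0) + (1 - S) * ∫ y in Set.Ioc (0:ℝ) 1, f (x, y)|
        ≤ |S * f (x, 0)| + |(1 - S) * ∫ y in Set.Ioc (0:ℝ) 1, f (x, y)| := abs_add_le _ _
      _ ≤ S * 1 + (1 - S) * 1 := by
          rw [abs_mul, abs_mul, abs_of_nonneg h0, abs_of_nonneg (by linarith : (0:ℝ) ≤ 1 - S)]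
          exact add_le_add (mul_le_mul_of_nonneg_left (hb _) h0)
            (mul_le_mul_of_nonneg_left (hIoc _) (by linarith))
      _ = 1 := by ring
  have hi1 : IntegrableOn (fun x => S * f (x, 0)) (Set.Ioc (0:ℝ) 1) volume := by
    rw [IntegrableOn, ← memLp_one_iff_integrable]
    exact MemLp.of_bound ((measurable_const.mul (hf.comp (measurable_id.prodMk measurable_const))).aestronglyMeasurable) (|S| * 1)
      (Filter.Eventually.of_forall fun x => by
        rw [Real.norm_eq_abs, abs_mul]; gcongr; exact hb _)
  have hi2 : IntegrableOn (fun x => (1 - S) * ∫ y in Set.Ioc (0:ℝ) 1, f (x, y))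
      (Set.Ioc (0:ℝ) 1) volume := by
    rw [IntegrableOn, ← memLp_one_iff_integrable]
    exact MemLp.of_bound ((measurable_const.mul hmeasH).aestronglyMeasurable) (|1 - S| * 1)
      (Filter.Eventually.of_forall fun x => by
        rw [Real.norm_eq_abs, abs_mul]; gcongr; exact hIoc _)
  rw [integral_add hi1 hi2, integral_const_mul, integral_const_mul]
  ring

lemma clamp_mem (x : ℝ) : max 0 (min x 1) ∈ Set.Icc (0:ℝ) 1 :=
  ⟨le_max_left _ _, max_le zero_le_one (min_le_right _ _)⟩

lemma clamp_eq {x : ℝ} (h0 : 0 ≤ x) (h1 : x ≤ 1) : max 0 (min x 1) = x := by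
  rw [min_eq_left h1, max_eq_right h0]

lemma clamp_meas : Measurable fun x : ℝ => max 0 (min x 1) :=
  measurable_const.max (measurable_id.min measurable_const)

lemma integral_pow_poly (k : ℕ) :
    ∫ x in Set.Ioc (0:ℝ) 1, (1 - x) * x ^ k = ((k:ℝ)+1)⁻¹ - ((k:ℝ)+2)⁻¹ := by
  rw [← intervalIntegral.integral_of_le zero_le_one]
  have h1 : ∀ x : ℝ, (1 - x) * x ^ k = x ^ k - x ^ (k+1) := fun x => by ring
  simp_rw [h1]
  rw [intervalIntegral.integral_sub (intervalIntegral.intervalIntegrable_pow k)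
    (intervalIntegral.intervalIntegrable_pow (k+1)),
    integral_pow, integral_pow]
  rw [one_pow, one_pow, zero_pow (by omega), zero_pow (by omega)]
  push_cast
  rw [sub_zero]
  norm_num
  ring

lemma integral_pow_plain (k : ℕ) :
    ∫ x in Set.Ioc (0:ℝ) 1, x ^ k = ((k:ℝ)+1)⁻¹ := by
  rw [← intervalIntegral.integral_of_le zero_le_one, integral_pow]
  rw [one_pow, zero_pow (by omega)]
  rw [sub_zero, one_div]

lemma evalA (S : ℝ) (h0 : 0 ≤ S) (h1 : S ≤ 1) (k : ℕ) :
    ∫ p : ℝ × ℝ, (if p.1 ≤ p.2 then (max 0 (min p.1 1))^k else 0)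
        ∂((mixLaw S).prod (mixLaw S)) =
      S^2 * (0:ℝ)^k + S*(1-S) * (0:ℝ)^k
        + (1-S)^2 * (((k:ℝ)+1)⁻¹ - ((k:ℝ)+2)⁻¹) := by
  have hf : Measurable fun p : ℝ × ℝ => if p.1 ≤ p.2 then (max 0 (min p.1 1))^k else 0 :=
    Measurable.ite (measurableSet_le measurable_fst measurable_snd)
      ((clamp_meas.comp measurable_fst).pow_const k) measurable_const
  have hb : ∀ p : ℝ × ℝ, |if p.1 ≤ p.2 then (max 0 (min p.1 1))^k else 0| ≤ 1 := by
    intro p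
    split
    · rw [abs_of_nonneg (pow_nonneg (clamp_mem p.1).1 k)]
      exact pow_le_one₀ (clamp_mem p.1).1 (clamp_mem p.1).2
    · simp
  rw [intMixProd S h0 h1 _ hf hb]
  have e1 : (if (0:ℝ) ≤ (0:ℝ) then (max 0 (min (0:ℝ) 1))^k else 0) = (0:ℝ)^k := by
    rw [if_pos le_rfl, clamp_eq le_rfl zero_le_one]
  have e2 : (∫ y in Set.Ioc (0:ℝ) 1, if (0:ℝ) ≤ y then (max 0 (min (0:ℝ) 1))^k else 0)
      = (0:ℝ)^k := by
    rw [setIntegral_congr_fun measurableSet_Ioc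
      (g := fun _ => (0:ℝ)^k) (fun y hy => by
        rw [if_pos (le_of_lt hy.1), clamp_eq le_rfl zero_le_one]),
      setIntegral_const]
    simp [Real.volume_Ioc]
  have e3 : (∫ x in Set.Ioc (0:ℝ) 1, if x ≤ (0:ℝ) then (max 0 (min x 1))^k else 0)
      = 0 := by
    rw [setIntegral_congr_fun measurableSet_Ioc (g := fun _ => (0:ℝ)) (fun x hx => by
      rw [if_neg (not_le.mpr hx.1)]), setIntegral_const]
    simp
  have e4 : (∫ x in Set.Ioc (0:ℝ) 1, ∫ y in Set.Ioc (0:ℝ) 1,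
      if x ≤ y then (max 0 (min x 1))^k else 0) = ((k:ℝ)+1)⁻¹ - ((k:ℝ)+2)⁻¹ := by
    rw [setIntegral_congr_fun measurableSet_Ioc (g := fun x => (1 - x) * x ^ k) ?inner]
    · exact integral_pow_poly k
    case inner =>
      intro x hx
      have hx0 := hx.1
      have hx1 := hx.2
      have hcl : max 0 (min x 1) = x := clamp_eq (le_of_lt hx0) hx1
      have hind : ∀ y : ℝ, (if x ≤ y then (max 0 (min x 1))^k else 0)
          = Set.indicator (Set.Ici x) (fun _ => x ^ k) y := by
        intro y
        simp only [Set.indicator_apply, Set.mem_Ici, hcl]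
      simp only [hind]
      rw [setIntegral_indicator measurableSet_Ici]
      have hset : Set.Ioc (0:ℝ) 1 ∩ Set.Ici x = Set.Icc x 1 := by
        ext y
        simp only [Set.mem_inter_iff, Set.mem_Ioc, Set.mem_Ici, Set.mem_Icc]
        constructor
        · rintro ⟨⟨_, hy1⟩, hxy⟩; exact ⟨hxy, hy1⟩
        · rintro ⟨hxy, hy1⟩; exact ⟨⟨lt_of_lt_of_le hx0 hxy, hy1⟩, hxy⟩
      rw [hset, setIntegral_const, Real.volume_real_Icc_of_le hx1, smul_eq_mul]
  rw [e1, e2, e3, e4]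
  ring

lemma evalB (S : ℝ) (h0 : 0 ≤ S) (h1 : S ≤ 1) (k : ℕ) :
    ∫ p : ℝ × ℝ, (if p.2 < p.1 then (max 0 (min p.1 1))^k else 0)
        ∂((mixLaw S).prod (mixLaw S)) =
      (1-S)*S * ((k:ℝ)+1)⁻¹ + (1-S)^2 * ((k:ℝ)+2)⁻¹ := by
  have hf : Measurable fun p : ℝ × ℝ => if p.2 < p.1 then (max 0 (min p.1 1))^k else 0 :=
    Measurable.ite (measurableSet_lt measurable_snd measurable_fst)
      ((clamp_meas.comp measurable_fst).pow_const k) measurable_const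
  have hb : ∀ p : ℝ × ℝ, |if p.2 < p.1 then (max 0 (min p.1 1))^k else 0| ≤ 1 := by
    intro p
    split
    · rw [abs_of_nonneg (pow_nonneg (clamp_mem p.1).1 k)]
      exact pow_le_one₀ (clamp_mem p.1).1 (clamp_mem p.1).2
    · simp
  rw [intMixProd S h0 h1 _ hf hb]
  have e1 : (if (0:ℝ) < (0:ℝ) then (max 0 (min (0:ℝ) 1))^k else 0) = (0:ℝ) := by
    rw [if_neg (lt_irrefl 0)]
  have e2 : (∫ y in Set.Ioc (0:ℝ) 1, if y < (0:ℝ) then (max 0 (min (0:ℝ) 1))^k else 0)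
      = 0 := by
    rw [setIntegral_congr_fun measurableSet_Ioc (g := fun _ => (0:ℝ)) (fun y hy => by
      rw [if_neg (not_lt.mpr (le_of_lt hy.1))]), setIntegral_const]
    simp
  have e3 : (∫ x in Set.Ioc (0:ℝ) 1, if (0:ℝ) < x then (max 0 (min x 1))^k else 0)
      = ((k:ℝ)+1)⁻¹ := by
    rw [setIntegral_congr_fun measurableSet_Ioc (g := fun x => x ^ k) (fun x hx => by
      rw [if_pos hx.1, clamp_eq (le_of_lt hx.1) hx.2])]
    exact integral_pow_plain k
  have e4 : (∫ x in Set.Ioc (0:ℝ) 1, ∫ y in Set.Ioc (0:ℝ) 1,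
      if y < x then (max 0 (min x 1))^k else 0) = ((k:ℝ)+2)⁻¹ := by
    rw [setIntegral_congr_fun measurableSet_Ioc (g := fun x => x ^ (k+1)) ?inner]
    · have := integral_pow_plain (k+1)
      rw [this]
      push_cast
      ring_nf
    case inner =>
      intro x hx
      have hx0 := hx.1
      have hx1 := hx.2
      have hcl : max 0 (min x 1) = x := clamp_eq (le_of_lt hx0) hx1
      have hind : ∀ y : ℝ, (if y < x then (max 0 (min x 1))^k else 0)
          = Set.indicator (Set.Iio x) (fun _ => x ^ k) y := by
        intro y
        simp only [Set.indicator_apply, Set.mem_Iio, hcl]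
      simp only [hind]
      rw [setIntegral_indicator measurableSet_Iio]
      have hset : Set.Ioc (0:ℝ) 1 ∩ Set.Iio x = Set.Ioo 0 x := by
        ext y
        simp only [Set.mem_inter_iff, Set.mem_Ioc, Set.mem_Iio, Set.mem_Ioo]
        constructor
        · rintro ⟨⟨hy0, _⟩, hyx⟩; exact ⟨hy0, hyx⟩
        · rintro ⟨hy0, hyx⟩; exact ⟨⟨hy0, le_trans (le_of_lt hyx) hx1⟩, hyx⟩
      rw [hset, setIntegral_const, Real.volume_real_Ioo_of_le hx0.le, smul_eq_mul]
      rw [sub_zero, pow_succ]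
      ring
  rw [e1, e2, e3, e4]
  ring

lemma varCase {Ω : Type*} [MeasureSpace Ω] [IsProbabilityMeasure (ℙ : Measure Ω)]
    (X1 : Ω → ℝ) (hX1 : Measurable X1) (s : Set Ω)
    (hae : ∀ᵐ ω ∂(ℙ : Measure Ω), X1 ω ∈ Set.Icc (0:ℝ) 1)
    (P M Q : ℝ) (hP : 0 < P) (h0 : ((ℙ : Measure Ω) s).toReal = P)
    (hk1 : ∫ ω in s, X1 ω ∂ℙ = M) (hk2 : ∫ ω in s, X1 ω ^ 2 ∂ℙ = Q) :
    variance X1 (ℙ[|s]) = P⁻¹ * Q - (P⁻¹ * M)^2 := by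
  have hne0 : (ℙ : Measure Ω) s ≠ 0 := by
    intro h
    rw [h] at h0
    simp at h0
    exact absurd h0 (ne_of_lt hP)
  haveI : IsProbabilityMeasure (ℙ[|s]) := cond_isProbabilityMeasure hne0
  have haeC : ∀ᵐ ω ∂(ℙ[|s]), X1 ω ∈ Set.Icc (0:ℝ) 1 :=
    hae.filter_mono cond_absolutelyContinuous.ae_le
  have hmem : MemLp X1 2 (ℙ[|s]) :=
    MemLp.of_bound hX1.aestronglyMeasurable 1
      (haeC.mono fun ω h => by
        rw [Real.norm_eq_abs, abs_le]
        exact ⟨by linarith [h.1], h.2⟩)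
  have hint : ∀ g : Ω → ℝ, ∫ ω, g ω ∂(ℙ[|s]) = P⁻¹ * ∫ ω in s, g ω ∂ℙ := by
    intro g
    rw [ProbabilityTheory.cond, integral_smul_measure, ENNReal.toReal_inv, h0, smul_eq_mul]
  rw [variance_eq_sub hmem]
  have h2 : (ℙ[|s])[X1 ^ 2] = P⁻¹ * Q := by
    rw [show X1 ^ 2 = fun ω => X1 ω ^ 2 from rfl, hint, hk2]
  have h1 : (ℙ[|s])[X1] = P⁻¹ * M := by
    rw [show (fun ω => X1 ω) = X1 from rfl] at *
    rw [hint X1, hk1]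
  rw [h2, h1]

lemma clamp_meas' : Measurable fun x : ℝ => max 0 (min x 1) :=
  measurable_const.max (measurable_id.min measurable_const)

theorem stmt5 {Ω : Type*} [MeasureSpace Ω] [IsProbabilityMeasure (ℙ : Measure Ω)]
    (S : ℝ) (hS : S ∈ Set.Ico (0:ℝ) 1)
    (X1 X2 : Ω → ℝ) (hX1 : Measurable X1) (hX2 : Measurable X2)
    (hindep : IndepFun X1 X2)
    (hL1 : Measure.map X1 ℙ = mixLaw S) (hL2 : Measure.map X2 ℙ = mixLaw S) :
    variance X1 (ℙ[|{ω | X1 ω ≤ X2 ω}])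
      = (1/6) * ((1 - S)^2 / (1 + S^2)) - ((1/3) * ((1 - S)^2 / (1 + S^2)))^2 ∧
    variance X1 (ℙ[|{ω | X2 ω < X1 ω}])
      = (1/6) * ((3 + S) / (1 + S)) - ((1/3) * ((2 + S) / (1 + S)))^2 := by
  obtain ⟨h0S, h1S⟩ := hS
  have h1S' : S ≤ 1 := le_of_lt h1S
  have hT : Measurable fun ω => (X1 ω, X2 ω) := hX1.prodMk hX2
  have hmap : Measure.map (fun ω => (X1 ω, X2 ω)) ℙ = (mixLaw S).prod (mixLaw S) := by
    rw [(indepFun_iff_map_prod_eq_prod_map_map hX1.aemeasurable hX2.aemeasurable).mp hindep,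
      hL1, hL2]
  -- a.e. bound on X1
  have hae : ∀ᵐ ω ∂(ℙ : Measure Ω), X1 ω ∈ Set.Icc (0:ℝ) 1 := by
    rw [ae_iff]
    have hpre : {ω | X1 ω ∉ Set.Icc (0:ℝ) 1} = X1 ⁻¹' (Set.Icc (0:ℝ) 1)ᶜ := rfl
    rw [hpre, ← Measure.map_apply hX1 measurableSet_Icc.compl, hL1]
    rw [mixLaw, Measure.add_apply, Measure.smul_apply, Measure.smul_apply,
      Measure.restrict_apply measurableSet_Icc.compl]
    have h1 : Measure.dirac (0:ℝ) (Set.Icc (0:ℝ) 1)ᶜ = 0 := by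
      rw [Measure.dirac_apply' _ measurableSet_Icc.compl]
      simp [Set.indicator_apply, Set.left_mem_Icc]
    have h2 : (Set.Icc (0:ℝ) 1)ᶜ ∩ Set.Ioc (0:ℝ) 1 = ∅ := by
      rw [Set.eq_empty_iff_forall_notMem]
      rintro x ⟨hx1, hx2⟩
      exact hx1 (Set.Ioc_subset_Icc_self hx2)
    rw [h1, h2]
    simp
  -- the bridge
  have bridgeA : ∀ k : ℕ, ∫ ω in {ω | X1 ω ≤ X2 ω}, X1 ω ^ k ∂ℙ
      = ∫ p : ℝ × ℝ, (if p.1 ≤ p.2 then (max 0 (min p.1 1))^k else 0)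
          ∂((mixLaw S).prod (mixLaw S)) := by
    intro k
    have hsA : MeasurableSet {ω | X1 ω ≤ X2 ω} := measurableSet_le hX1 hX2
    have hFm : Measurable fun p : ℝ × ℝ => if p.1 ≤ p.2 then (max 0 (min p.1 1))^k else 0 :=
      Measurable.ite (measurableSet_le measurable_fst measurable_snd)
        ((clamp_meas'.comp measurable_fst).pow_const k) measurable_const
    rw [← integral_indicator hsA]
    rw [← hmap, integral_map hT.aemeasurable hFm.aestronglyMeasurable]
    apply integral_congr_ae
    filter_upwards [hae] with ω hω
    by_cases h : X1 ω ≤ X2 ω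
    · rw [Set.indicator_of_mem (by exact h), if_pos h, min_eq_left hω.2, max_eq_right hω.1]
    · rw [Set.indicator_of_notMem (by exact h), if_neg h]
  have bridgeB : ∀ k : ℕ, ∫ ω in {ω | X2 ω < X1 ω}, X1 ω ^ k ∂ℙ
      = ∫ p : ℝ × ℝ, (if p.2 < p.1 then (max 0 (min p.1 1))^k else 0)
          ∂((mixLaw S).prod (mixLaw S)) := by
    intro k
    have hsB : MeasurableSet {ω | X2 ω < X1 ω} := measurableSet_lt hX2 hX1
    have hFm : Measurable fun p : ℝ × ℝ => if p.2 < p.1 then (max 0 (min p.1 1))^k else 0 :=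
      Measurable.ite (measurableSet_lt measurable_snd measurable_fst)
        ((clamp_meas'.comp measurable_fst).pow_const k) measurable_const
    rw [← integral_indicator hsB]
    rw [← hmap, integral_map hT.aemeasurable hFm.aestronglyMeasurable]
    apply integral_congr_ae
    filter_upwards [hae] with ω hω
    by_cases h : X2 ω < X1 ω
    · rw [Set.indicator_of_mem (by exact h), if_pos h, min_eq_left hω.2, max_eq_right hω.1]
    · rw [Set.indicator_of_notMem (by exact h), if_neg h]
  -- numeric values, case A
  have hPA : ((ℙ : Measure Ω) {ω | X1 ω ≤ X2 ω}).toReal = (1 + S^2)/2 := by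
    have hsA : MeasurableSet {ω | X1 ω ≤ X2 ω} := measurableSet_le hX1 hX2
    have h := bridgeA 0
    rw [evalA S h0S h1S' 0] at h
    simp only [pow_zero] at h
    rw [setIntegral_const] at h
    simp only [smul_eq_mul, mul_one] at h
    rw [← measureReal_def, h]
    norm_num
    ring
  have hMA : ∫ ω in {ω | X1 ω ≤ X2 ω}, X1 ω ∂ℙ = (1-S)^2/6 := by
    have h := bridgeA 1
    rw [evalA S h0S h1S' 1] at h
    simp only [pow_one] at h
    rw [h]
    norm_num
    ring
  have hQA : ∫ ω in {ω | X1 ω ≤ X2 ω}, X1 ω ^ 2 ∂ℙ = (1-S)^2/12 := by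
    have h := bridgeA 2
    rw [evalA S h0S h1S' 2] at h
    rw [h]
    norm_num
    ring
  -- numeric values, case B
  have hPB : ((ℙ : Measure Ω) {ω | X2 ω < X1 ω}).toReal = (1-S)*(1+S)/2 := by
    have h := bridgeB 0
    rw [evalB S h0S h1S' 0] at h
    simp only [pow_zero] at h
    rw [setIntegral_const] at h
    simp only [smul_eq_mul, mul_one] at h
    rw [← measureReal_def, h]
    norm_num
    ring
  have hMB : ∫ ω in {ω | X2 ω < X1 ω}, X1 ω ∂ℙ = (1-S)*(2+S)/6 := by
    have h := bridgeB 1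
    rw [evalB S h0S h1S' 1] at h
    simp only [pow_one] at h
    rw [h]
    norm_num
    ring
  have hQB : ∫ ω in {ω | X2 ω < X1 ω}, X1 ω ^ 2 ∂ℙ = (1-S)*(3+S)/12 := by
    have h := bridgeB 2
    rw [evalB S h0S h1S' 2] at h
    rw [h]
    norm_num
    ring
  have h1S2 : (1:ℝ) + S^2 ≠ 0 := by positivity
  have h1pS : (1:ℝ) + S ≠ 0 := by positivity
  have h1mS : (1:ℝ) - S ≠ 0 := by linarith
  constructor
  · rw [varCase X1 hX1 _ hae ((1 + S^2)/2) ((1-S)^2/6) ((1-S)^2/12)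
      (by positivity) hPA hMA hQA]
    field_simp
    ring
  · rw [varCase X1 hX1 _ hae ((1-S)*(1+S)/2) ((1-S)*(2+S)/6) ((1-S)*(3+S)/12)
      (by nlinarith) hPB hMB hQB]
    field_simp
    ring
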